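/- In J\u00f8rgensen's DSRG with parameters ((k²−1)/μ, k, μ+1, μ, μ) — vertex set ℤ_n with n = (k²−1)/μ and a dart from x to y iff x + ky ∈ {1,…,k} (mod n) — assume μ ∈ {1,2} and μ ∣ k−1, and let a = (k+1)/μ. Then the residue classes C_i = {s : s ≡ i (mod a)}, i = 0,…,a−1, form a column-equitable partition: every vertex y has exactly μ−1 inneighbours in its own class and exactly μ inneighbours in each other class. -/
import Mathlib


/-- Jørgensen's DSRG has vertex set `ZMod n`, `n = (k²−1)/μ`, with a dart from
`x` to `y` iff `x + ky ∈ {1,…,k} (mod n)`. -/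
def jorgensenDart (n k : ℕ) (x y : ZMod n) : Prop :=
  ∃ s : ℕ, 1 ≤ s ∧ s ≤ k ∧ x + (k : ZMod n) * y = (s : ZMod n)

lemma count_range_cast (a : ℕ) [NeZero a] (c : ZMod a) (m : ℕ) :
    ((Finset.range (m * a)).filter (fun s : ℕ => (s : ZMod a) = c)).card = m := by
  classical
  have hapos : 0 < a := Nat.pos_of_ne_zero (NeZero.ne a)
  have himg : (Finset.range (m * a)).filter (fun s : ℕ => (s : ZMod a) = c)
      = (Finset.range m).image (fun q => q * a + c.val) := by
    ext s
    simp only [Finset.mem_filter, Finset.mem_range, Finset.mem_image]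
    constructor
    · rintro ⟨hlt, hc⟩
      refine ⟨s / a, ?_, ?_⟩
      · rwa [Nat.div_lt_iff_lt_mul hapos]
      · have hmod : s % a = c.val := by rw [← hc, ZMod.val_natCast]
        have h2 := Nat.div_add_mod s a
        rw [mul_comm] at h2
        omega
    · rintro ⟨q, hq, rfl⟩
      refine ⟨?_, ?_⟩
      · have hcv : c.val < a := ZMod.val_lt c
        have : q + 1 ≤ m := hq
        have h2 : (q + 1) * a ≤ m * a := Nat.mul_le_mul_right a this
        have : q * a + a = (q + 1) * a := by ring
        omega
      · push_cast
        simp [ZMod.natCast_self, ZMod.natCast_val, ZMod.cast_id]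
  rw [himg, Finset.card_image_of_injective _ ?_, Finset.card_range]
  intro q q' h
  simp only [Nat.add_right_cancel_iff] at h
  exact Nat.eq_of_mul_eq_mul_right hapos h


/-- In Jørgensen's DSRG with parameters `((k²−1)/μ, k, μ+1, μ, μ)`, for
`μ ∈ {1,2}` and `a = (k+1)/μ`, the residue classes modulo `a` form a
column-equitable partition: every vertex has exactly `μ−1` inneighbours in its
own class and exactly `μ` inneighbours in each other class. -/
theorem jorgensen_residue_partition (n k mu a : ℕ) [NeZero n]
    (hk : 1 ≤ k) (hdvd : mu ∣ k - 1) (hmu : mu = 1 ∨ mu = 2)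
    (hn : mu * n = k ^ 2 - 1) (ha : mu * a = k + 1) :
    ∀ y : ZMod n, ∀ i : ℕ, i < a →
      {x : ZMod n | jorgensenDart n k x y ∧ x.val % a = i}.ncard
        = if i = y.val % a then mu - 1 else mu := by
  classical
  intro y i hi
  have hnne : n ≠ 0 := NeZero.ne n
  have hmupos : 1 ≤ mu := by rcases hmu with rfl | rfl <;> omega
  -- k ≥ 2
  have hk2 : 2 ≤ k := by
    by_contra h
    have hk1 : k = 1 := by omega
    subst hk1
    simp at hn
    rcases hn with h | h <;> omega
  -- a ≥ 2
  have ha2 : 2 ≤ a := by rcases hmu with rfl | rfl <;> omega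
  haveI : NeZero a := ⟨by omega⟩
  -- n = (k-1) * a
  have hsq : k ^ 2 - 1 = (k - 1) * (k + 1) := by
    obtain ⟨m, rfl⟩ : ∃ m, k = m + 2 := ⟨k - 2, by omega⟩
    have h1 : (m + 2) ^ 2 = (m + 1) * (m + 3) + 1 := by ring
    have h2 : (m + 2 - 1) * (m + 2 + 1) = (m + 1) * (m + 3) := by
      congr 1
    omega
  have hna : n = (k - 1) * a := by
    have h1 : mu * n = mu * ((k - 1) * a) := by
      rw [hn, hsq, ← ha]; ring
    exact Nat.eq_of_mul_eq_mul_left (by omega) h1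
  -- k < n
  have hkn : k < n := by
    rcases Nat.lt_or_ge k 3 with h3 | h3
    · have hk2' : k = 2 := by omega
      have ha3 : a = 3 := by rcases hmu with rfl | rfl <;> omega
      subst hk2' ha3
      rw [show (2 - 1 : ℕ) * 3 = 3 by norm_num] at hna
      omega
    · have h2a : (k - 1) * 2 ≤ (k - 1) * a := Nat.mul_le_mul_left _ ha2
      omega
  have hadvdn : a ∣ n := ⟨k - 1, by rw [hna, mul_comm]⟩
  -- cast facts
  have hka : (k : ZMod a) = -1 := by
    have h1 : ((mu * a : ℕ) : ZMod a) = ((k + 1 : ℕ) : ZMod a) := by rw [ha]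
    push_cast at h1
    rw [ZMod.natCast_self, mul_zero] at h1
    linear_combination -h1
  set φ := ZMod.castHom hadvdn (ZMod a) with hφ
  set c : ZMod a := (i : ZMod a) - (y.val : ZMod a) with hc
  -- the key equivalence
  have key : ∀ s : ℕ, (((s : ZMod n) - (k : ZMod n) * y).val % a = i) ↔ ((s : ZMod a) = c) := by
    intro s
    have h1 : (((s : ZMod n) - (k : ZMod n) * y).val : ZMod a)
        = (s : ZMod a) + (y.val : ZMod a) := by
      rw [ZMod.natCast_val, ← ZMod.castHom_apply (h := hadvdn), map_sub, map_mul,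
        map_natCast, map_natCast, hka, ZMod.castHom_apply, ← ZMod.natCast_val]
      ring
    constructor
    · intro h
      have h2 : (((s : ZMod n) - (k : ZMod n) * y).val : ZMod a) = (i : ZMod a) := by
        rw [← ZMod.natCast_mod _ a, h]
      rw [h1] at h2
      rw [hc]
      linear_combination h2
    · intro h
      have h2 : (((s : ZMod n) - (k : ZMod n) * y).val : ZMod a) = (i : ZMod a) := by
        rw [h1, h, hc]; ring
      have h3 := congrArg ZMod.val h2
      rwa [ZMod.val_natCast, ZMod.val_natCast, Nat.mod_eq_of_lt hi] at h3
  -- the set as an image of a finset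
  set T : Finset ℕ := (Finset.Icc 1 k).filter (fun s : ℕ => (s : ZMod a) = c) with hT
  have hset : {x : ZMod n | jorgensenDart n k x y ∧ x.val % a = i}
      = (fun s : ℕ => (s : ZMod n) - (k : ZMod n) * y) '' (T : Set ℕ) := by
    ext x
    simp only [Set.mem_setOf_eq, Set.mem_image, hT, Finset.coe_filter, Finset.mem_Icc,
      Set.mem_setOf_eq, jorgensenDart]
    constructor
    · rintro ⟨⟨s, h1, h2, hxs⟩, hmod⟩
      have hx : x = (s : ZMod n) - (k : ZMod n) * y := eq_sub_of_add_eq hxs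
      refine ⟨s, ⟨⟨h1, h2⟩, ?_⟩, hx.symm⟩
      rw [← key s, ← hx]
      exact hmod
    · rintro ⟨s, ⟨⟨h1, h2⟩, hs⟩, rfl⟩
      exact ⟨⟨s, h1, h2, by ring⟩, (key s).mpr hs⟩
  have hinj : Set.InjOn (fun s : ℕ => (s : ZMod n) - (k : ZMod n) * y) (T : Set ℕ) := by
    intro s hs t ht h
    simp only [hT, Finset.coe_filter, Finset.mem_Icc, Set.mem_setOf_eq] at hs ht
    have h' : (s : ZMod n) = (t : ZMod n) := by
      have := sub_left_injective (G := ZMod n) h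
      simpa using this
    have hv := congrArg ZMod.val h'
    rwa [ZMod.val_natCast, ZMod.val_natCast, Nat.mod_eq_of_lt (by omega),
      Nat.mod_eq_of_lt (by omega)] at hv
  rw [hset, Set.ncard_image_of_injOn hinj, Set.ncard_coe_finset]
  -- compute the cardinality
  have hIcc : Finset.Icc 1 k = (Finset.range (mu * a)).erase 0 := by
    ext x
    simp only [Finset.mem_Icc, Finset.mem_erase, Finset.mem_range]
    omega
  have hcard0 := count_range_cast a c mu
  have hceq : (c = 0) ↔ (i = y.val % a) := by
    rw [hc, sub_eq_zero]
    constructor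
    · intro h
      have := congrArg ZMod.val h
      rwa [ZMod.val_natCast, ZMod.val_natCast, Nat.mod_eq_of_lt hi] at this
    · intro h
      rw [h, ZMod.natCast_mod]
  rw [hT, hIcc, Finset.filter_erase]
  by_cases hc0 : c = 0
  · have h0mem : (0 : ℕ) ∈ (Finset.range (mu * a)).filter (fun s : ℕ => (s : ZMod a) = c) := by
      simp only [Finset.mem_filter, Finset.mem_range, Nat.cast_zero]
      exact ⟨by omega, hc0.symm⟩
    rw [Finset.card_erase_of_mem h0mem, hcard0, if_pos (hceq.mp hc0)]
  · have h0mem : (0 : ℕ) ∉ (Finset.range (mu * a)).filter (fun s : ℕ => (s : ZMod a) = c) := by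
      simp only [Finset.mem_filter, Finset.mem_range, Nat.cast_zero]
      intro h
      exact hc0 h.2.symm
    rw [Finset.erase_eq_of_notMem h0mem, hcard0, if_neg (fun h => hc0 (hceq.mpr h))]
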